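/- (Theorem 1, necessity.) Let m ≥ 2 and n ≥ 1, and let X(0), ..., X(n-1) be random vectors in ℝ^m with components bounded as X_min,i ≤ X_i(k) ≤ X_max,i, X_min,i > -1, X_max,i finite. Define 𝒳_{n,i} := ∏_{k=0}^{n-1} (1 + X_i(k)) - 1 and g_n(K) := (1/n) E[log(1 + K^T 𝒳_n)]. Suppose K* ∈ 𝒦 maximizes g_n over the unit simplex 𝒦 = {K ∈ ℝ^m : K_i ≥ 0 for all i, ∑_{i=1}^m K_i = 1}. Then for each i = 1, ..., m: if K*_i > 0 then E[(1 + 𝒳_{n,i}) / (1 + K*^T 𝒳_n)] = 1, and if K*_i = 0 then E[(1 + 𝒳_{n,i}) / (1 + K*^T 𝒳_n)] ≤ 1. -/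

import Mathlib

open MeasureTheory Finset

lemma log_one_add_ge (u : ℝ) (hu : -(1/2) ≤ u) : u - 2*u^2 ≤ Real.log (1+u) := by
  have h1 : (0:ℝ) < 1 + u := by linarith
  have h2 := Real.log_le_sub_one_of_pos (show (0:ℝ) < (1+u)⁻¹ by positivity)
  rw [Real.log_inv] at h2
  have h3 : (1+u) * (1+u)⁻¹ = 1 := mul_inv_cancel₀ h1.ne'
  nlinarith [sq_nonneg u, sq_nonneg (1+u)]

lemma key_deriv {Ω : Type*} [MeasurableSpace Ω] (μ : Measure Ω) [IsProbabilityMeasure μ]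
    (S D : Ω → ℝ) (hS : Measurable S) (hD : Measurable D)
    (cl cu : ℝ) (hcl : 0 < cl) (hclcu : cl ≤ cu)
    (hSb : ∀ ω, cl ≤ S ω ∧ S ω ≤ cu)
    (hPb : ∀ ω, cl ≤ S ω + D ω ∧ S ω + D ω ≤ cu)
    (hle : ∀ l : ℝ, 0 < l → l ≤ 1 →
      ∫ ω, Real.log (S ω + l * D ω) ∂μ ≤ ∫ ω, Real.log (S ω) ∂μ) :
    ∫ ω, D ω / S ω ∂μ ≤ 0 := by
  set C : ℝ := cu / cl with hCdef
  have hC : 0 < C := div_pos (lt_of_lt_of_le hcl hclcu) hcl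
  have hC1 : 1 ≤ C := (one_le_div hcl).2 hclcu
  -- basic pointwise bounds
  have hDS : ∀ ω, |D ω / S ω| ≤ C := by
    intro ω
    obtain ⟨h1, h2⟩ := hSb ω
    obtain ⟨h3, h4⟩ := hPb ω
    rw [abs_div, abs_of_pos (lt_of_lt_of_le hcl h1)]
    rw [div_le_div_iff₀ (lt_of_lt_of_le hcl h1) hcl]
    have : |D ω| ≤ cu - cl := by
      rw [abs_le]; constructor <;> nlinarith
    nlinarith [abs_nonneg (D ω)]
  -- integrability of D/S
  have hmDS : Measurable fun ω => D ω / S ω := hD.div hS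
  have hiDS : Integrable (fun ω => D ω / S ω) μ := by
    refine (integrable_const C).mono' hmDS.aestronglyMeasurable ?_
    exact Filter.Eventually.of_forall fun ω => by
      rw [Real.norm_eq_abs]; exact hDS ω
  -- log integrability helper
  have hlogbound : ∀ x : ℝ, cl ≤ x → x ≤ cu → |Real.log x| ≤ |Real.log cl| + |Real.log cu| := by
    intro x h1 h2
    have hx : 0 < x := lt_of_lt_of_le hcl h1
    have l1 : Real.log cl ≤ Real.log x := Real.log_le_log hcl h1
    have l2 : Real.log x ≤ Real.log cu := Real.log_le_log hx h2
    rw [abs_le]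
    constructor
    · calc -(|Real.log cl| + |Real.log cu|) ≤ -|Real.log cl| := by
            nlinarith [abs_nonneg (Real.log cu)]
        _ ≤ Real.log cl := neg_abs_le _
        _ ≤ Real.log x := l1
    · calc Real.log x ≤ Real.log cu := l2
        _ ≤ |Real.log cu| := le_abs_self _
        _ ≤ |Real.log cl| + |Real.log cu| := by nlinarith [abs_nonneg (Real.log cl)]
  have hiLog : ∀ l : ℝ, 0 ≤ l → l ≤ 1 →
      Integrable (fun ω => Real.log (S ω + l * D ω)) μ := by
    intro l hl0 hl1
    have hmes : Measurable fun ω => Real.log (S ω + l * D ω) :=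
      Real.measurable_log.comp (hS.add (hD.const_mul l))
    refine (integrable_const (|Real.log cl| + |Real.log cu|)).mono'
      hmes.aestronglyMeasurable (Filter.Eventually.of_forall fun ω => ?_)
    obtain ⟨h1, h2⟩ := hSb ω
    obtain ⟨h3, h4⟩ := hPb ω
    have e1 : cl ≤ S ω + l * D ω := by nlinarith
    have e2 : S ω + l * D ω ≤ cu := by nlinarith
    rw [Real.norm_eq_abs]; exact hlogbound _ e1 e2
  -- main estimate
  have key : ∀ l : ℝ, 0 < l → l ≤ 1 → l * C ≤ 1/2 → ∫ ω, D ω / S ω ∂μ ≤ 2 * l * C^2 := by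
    intro l hl0 hl1 hlC
    have hpt : ∀ ω, l * (D ω / S ω) - 2 * l^2 * C^2 ≤
        Real.log (S ω + l * D ω) - Real.log (S ω) := by
      intro ω
      obtain ⟨h1, h2⟩ := hSb ω
      have hSpos : 0 < S ω := lt_of_lt_of_le hcl h1
      set u : ℝ := l * (D ω / S ω) with hu
      have hub : |u| ≤ l * C := by
        rw [hu, abs_mul, abs_of_pos hl0]
        exact mul_le_mul_of_nonneg_left (hDS ω) hl0.le
      have hu2 : -(1/2) ≤ u := by
        have := (abs_le.1 hub).1; linarith
      have heq : S ω + l * D ω = S ω * (1 + u) := by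
        rw [hu]; field_simp
      have hlog := log_one_add_ge u hu2
      have h1u : (0:ℝ) < 1 + u := by
        have := (abs_le.1 hub).1; linarith
      rw [heq, Real.log_mul hSpos.ne' h1u.ne']
      have hu2' : u^2 ≤ (l*C)^2 := by
        have h := pow_le_pow_left₀ (abs_nonneg u) hub 2
        rwa [sq_abs] at h
      nlinarith
    have hint1 := hiLog l hl0.le hl1
    have hint0 := hiLog 0 le_rfl zero_le_one
    simp only [zero_mul, add_zero] at hint0
    have hi2 : Integrable (fun ω => l * (D ω / S ω) - 2 * l^2 * C^2) μ :=
      ((hiDS.const_mul l).sub (integrable_const _))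
    have hmain : ∫ ω, (l * (D ω / S ω) - 2 * l^2 * C^2) ∂μ ≤
        ∫ ω, (Real.log (S ω + l * D ω) - Real.log (S ω)) ∂μ :=
      integral_mono hi2 (hint1.sub hint0) hpt
    rw [integral_sub hint1 hint0] at hmain
    rw [integral_sub (hiDS.const_mul l) (integrable_const _)] at hmain
    rw [integral_const_mul, integral_const] at hmain
    have hle' := hle l hl0 hl1
    have : l * ∫ ω, D ω / S ω ∂μ ≤ 2 * l^2 * C^2 := by
      simp only [measure_univ, probReal_univ, ENNReal.toReal_one, smul_eq_mul, one_mul] at hmain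
      linarith
    calc ∫ ω, D ω / S ω ∂μ = (l * ∫ ω, D ω / S ω ∂μ) / l := by
          field_simp
      _ ≤ (2 * l^2 * C^2) / l := by gcongr
      _ = 2 * l * C^2 := by field_simp
  -- conclude by letting l → 0
  refine le_of_forall_pos_le_add fun ε hε => ?_
  have hCC : (0:ℝ) < 2 * C^2 := by positivity
  set l : ℝ := min (1/(2*C)) (ε / (2*C^2)) with hl
  have hl0 : 0 < l := lt_min (by positivity) (by positivity)
  have hl1 : l ≤ 1 := by
    have : l ≤ 1/(2*C) := min_le_left _ _
    have h2 : 1/(2*C) ≤ 1 := by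
      rw [div_le_one (by positivity)]; linarith
    linarith
  have hlC : l * C ≤ 1/2 := by
    have : l ≤ 1/(2*C) := min_le_left _ _
    calc l * C ≤ (1/(2*C)) * C := mul_le_mul_of_nonneg_right this hC.le
      _ = 1/2 := by field_simp
  have := key l hl0 hl1 hlC
  have h2 : 2 * l * C^2 ≤ ε := by
    have hle2 : l ≤ ε / (2*C^2) := min_le_right _ _
    calc 2 * l * C^2 ≤ 2 * (ε / (2*C^2)) * C^2 := by nlinarith
      _ = ε := by field_simp
  linarith

/-- Theorem 1 (necessity): if `K*` maximizes the expected log growth `gₙ` over the unit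
simplex, then for each asset `i`: `E[(1 + 𝒳ₙᵢ)/(1 + K*ᵀ 𝒳ₙ)] = 1` whenever `K*ᵢ > 0`, and
`E[(1 + 𝒳ₙᵢ)/(1 + K*ᵀ 𝒳ₙ)] ≤ 1` whenever `K*ᵢ = 0`. -/
theorem kelly_optimal_necessity
    {Ω : Type*} [MeasurableSpace Ω] (μ : Measure Ω) [IsProbabilityMeasure μ]
    (m n : ℕ) (hm : 2 ≤ m) (hn : 1 ≤ n)
    (X : ℕ → Ω → Fin m → ℝ) (hmeas : ∀ k, Measurable (X k))
    (Xmin Xmax : Fin m → ℝ)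
    (hXmin : ∀ i, -1 < Xmin i)
    (hbd : ∀ k (ω : Ω) (i : Fin m), Xmin i ≤ X k ω i ∧ X k ω i ≤ Xmax i)
    (Kstar : Fin m → ℝ) (hKstar0 : ∀ i, 0 ≤ Kstar i) (hKstar1 : ∑ i, Kstar i = 1)
    (hopt : ∀ K : Fin m → ℝ, (∀ i, 0 ≤ K i) → ∑ i, K i = 1 →
      (1 / (n : ℝ)) *
          ∫ ω, Real.log
            (1 + ∑ i, K i * ((∏ k ∈ Finset.range n, (1 + X k ω i)) - 1)) ∂μ ≤
        (1 / (n : ℝ)) *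
          ∫ ω, Real.log
            (1 + ∑ i, Kstar i * ((∏ k ∈ Finset.range n, (1 + X k ω i)) - 1)) ∂μ) :
    ∀ i : Fin m,
      (0 < Kstar i →
        ∫ ω, (1 + ((∏ k ∈ Finset.range n, (1 + X k ω i)) - 1)) /
              (1 + ∑ j, Kstar j * ((∏ k ∈ Finset.range n, (1 + X k ω j)) - 1)) ∂μ = 1) ∧
      (Kstar i = 0 →
        ∫ ω, (1 + ((∏ k ∈ Finset.range n, (1 + X k ω i)) - 1)) /
              (1 + ∑ j, Kstar j * ((∏ k ∈ Finset.range n, (1 + X k ω j)) - 1)) ∂μ ≤ 1) := by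
  have hΩ : Nonempty Ω := MeasureTheory.Measure.nonempty_of_neZero μ
  have hmne : Nonempty (Fin m) := ⟨⟨0, by omega⟩⟩
  set P : Fin m → Ω → ℝ := fun i ω => ∏ k ∈ Finset.range n, (1 + X k ω i) with hPdef
  set S : Ω → ℝ := fun ω => ∑ j, Kstar j * P j ω with hSdef
  -- measurability
  have hmP : ∀ i, Measurable (P i) := by
    intro i
    apply Finset.measurable_prod
    intro k _
    exact measurable_const.add ((measurable_pi_apply i).comp (hmeas k))
  have hmS : Measurable S := by
    apply Finset.measurable_sum
    intro j _
    exact (hmP j).const_mul _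
  -- bounds
  set a : Fin m → ℝ := fun i => (1 + Xmin i)^n with hadef
  set b : Fin m → ℝ := fun i => (1 + Xmax i)^n with hbdef
  have ha : ∀ i, 0 < a i := fun i => pow_pos (by linarith [hXmin i]) n
  have haP : ∀ i ω, a i ≤ P i ω := by
    intro i ω
    calc a i = ∏ _k ∈ Finset.range n, (1 + Xmin i) := by
          rw [Finset.prod_const, Finset.card_range]
      _ ≤ P i ω := by
          apply Finset.prod_le_prod
          · intro k _; linarith [hXmin i]
          · intro k _; linarith [(hbd k ω i).1]
  have hPbnd : ∀ i ω, P i ω ≤ b i := by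
    intro i ω
    calc P i ω ≤ ∏ _k ∈ Finset.range n, (1 + Xmax i) := by
          apply Finset.prod_le_prod
          · intro k _; linarith [hXmin i, (hbd k ω i).1]
          · intro k _; linarith [(hbd k ω i).2]
      _ = b i := by rw [Finset.prod_const, Finset.card_range]
  set cl : ℝ := Finset.univ.inf' Finset.univ_nonempty a with hcldef
  set cu : ℝ := Finset.univ.sup' Finset.univ_nonempty b with hcudef
  have hcla : ∀ i, cl ≤ a i := fun i => Finset.inf'_le _ (Finset.mem_univ i)
  have hbcu : ∀ i, b i ≤ cu := fun i => Finset.le_sup' _ (Finset.mem_univ i)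
  have hcl : 0 < cl := by
    rw [hcldef, Finset.lt_inf'_iff]
    exact fun i _ => ha i
  have hPlu : ∀ i ω, cl ≤ P i ω ∧ P i ω ≤ cu := fun i ω =>
    ⟨le_trans (hcla i) (haP i ω), le_trans (hPbnd i ω) (hbcu i)⟩
  have hclcu : cl ≤ cu := by
    obtain ⟨ω⟩ := hΩ
    obtain ⟨i⟩ := hmne
    exact le_trans (hPlu i ω).1 (hPlu i ω).2
  have hSlu : ∀ ω, cl ≤ S ω ∧ S ω ≤ cu := by
    intro ω
    constructor
    · calc cl = ∑ j, Kstar j * cl := by rw [← Finset.sum_mul, hKstar1, one_mul]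
        _ ≤ S ω := Finset.sum_le_sum fun j _ =>
            mul_le_mul_of_nonneg_left (hPlu j ω).1 (hKstar0 j)
    · calc S ω ≤ ∑ j, Kstar j * cu := Finset.sum_le_sum fun j _ =>
            mul_le_mul_of_nonneg_left (hPlu j ω).2 (hKstar0 j)
        _ = cu := by rw [← Finset.sum_mul, hKstar1, one_mul]
  have hSpos : ∀ ω, 0 < S ω := fun ω => lt_of_lt_of_le hcl (hSlu ω).1
  -- rewriting identity
  have hrw : ∀ (K : Fin m → ℝ), ∑ j, K j = 1 → ∀ ω : Ω,
      1 + ∑ j, K j * (P j ω - 1) = ∑ j, K j * P j ω := by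
    intro K hK1 ω
    have : ∑ j, K j * (P j ω - 1) = ∑ j, K j * P j ω - ∑ j, K j := by
      rw [← Finset.sum_sub_distrib]
      congr 1; funext j; ring
    rw [this, hK1]; ring
  -- integrability of P i / S
  have hint : ∀ i, Integrable (fun ω => P i ω / S ω) μ := by
    intro i
    refine (integrable_const (cu / cl)).mono'
      ((hmP i).div hmS).aestronglyMeasurable
      (Filter.Eventually.of_forall fun ω => ?_)
    rw [Real.norm_eq_abs, abs_div, abs_of_pos (lt_of_lt_of_le hcl (hPlu i ω).1),
      abs_of_pos (hSpos ω)]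
    apply div_le_div₀ (le_trans hcl.le hclcu) (hPlu i ω).2 hcl (hSlu ω).1
  -- part A : E i ≤ 1 for all i
  have hA : ∀ i, ∫ ω, P i ω / S ω ∂μ ≤ 1 := by
    intro i
    have hkd : ∫ ω, (P i ω - S ω) / S ω ∂μ ≤ 0 := by
      apply key_deriv μ S (fun ω => P i ω - S ω) hmS ((hmP i).sub hmS) cl cu hcl hclcu hSlu
      · intro ω
        obtain ⟨h1, h2⟩ := hPlu i ω
        refine ⟨?_, ?_⟩
        · show cl ≤ S ω + (P i ω - S ω); linarith
        · show S ω + (P i ω - S ω) ≤ cu; linarith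
      · intro l hl0 hl1
        set K : Fin m → ℝ := fun j => (1 - l) * Kstar j + l * (if j = i then 1 else 0)
          with hKdef
        have hK0 : ∀ j, 0 ≤ K j := by
          intro j
          show 0 ≤ (1 - l) * Kstar j + l * (if j = i then 1 else 0)
          have hite : (0:ℝ) ≤ if j = i then (1:ℝ) else 0 := by positivity
          nlinarith [hKstar0 j]
        have hK1 : ∑ j, K j = 1 := by
          show ∑ j, ((1 - l) * Kstar j + l * (if j = i then 1 else 0)) = 1
          rw [Finset.sum_add_distrib, ← Finset.mul_sum, hKstar1, ← Finset.mul_sum,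
            Finset.sum_ite_eq' Finset.univ i (fun _ => (1:ℝ)), if_pos (Finset.mem_univ i)]
          ring
        have h := hopt K hK0 hK1
        have hnpos : (0:ℝ) < 1 / (n:ℝ) := by
          have : (0:ℝ) < (n:ℝ) := by exact_mod_cast hn
          positivity
        have h2 := le_of_mul_le_mul_left (by exact h) hnpos
        have e1 : (fun ω => Real.log (1 + ∑ j, K j * (P j ω - 1))) =
            fun ω => Real.log (S ω + l * (P i ω - S ω)) := by
          funext ω
          rw [hrw K hK1 ω]
          congr 1
          rw [hKdef, hSdef]
          simp only [add_mul, Finset.sum_add_distrib, mul_assoc, ← Finset.mul_sum,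
            ite_mul, one_mul, zero_mul, Finset.sum_ite_eq', Finset.mem_univ, if_true]
          ring
        have e2 : (fun ω => Real.log (1 + ∑ j, Kstar j * (P j ω - 1))) =
            fun ω => Real.log (S ω) := by
          funext ω
          rw [hrw Kstar hKstar1 ω]
        rw [e1, e2] at h2
        exact h2
    have epts : (fun ω => (P i ω - S ω) / S ω) = fun ω => P i ω / S ω - 1 := by
      funext ω
      rw [sub_div, div_self (hSpos ω).ne']
    rw [epts] at hkd
    rw [integral_sub (hint i) (integrable_const 1), integral_const] at hkd
    simp only [measure_univ, probReal_univ, ENNReal.toReal_one, smul_eq_mul, one_mul] at hkd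
    linarith
  -- part B : ∑ j Kstar j * E j = 1
  have hB : ∑ j, Kstar j * ∫ ω, P j ω / S ω ∂μ = 1 := by
    have e : ∀ j : Fin m, Kstar j * ∫ ω, P j ω / S ω ∂μ =
        ∫ ω, Kstar j * (P j ω / S ω) ∂μ := fun j => (integral_const_mul _ _).symm
    rw [Finset.sum_congr rfl fun j _ => e j]
    rw [← integral_finset_sum _ fun j _ => (hint j).const_mul _]
    have : (fun ω => ∑ j, Kstar j * (P j ω / S ω)) = fun _ => (1:ℝ) := by
      funext ω
      have h1 : ∑ j, Kstar j * (P j ω / S ω) = (∑ j, Kstar j * P j ω) / S ω := by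
        rw [Finset.sum_div]
        exact Finset.sum_congr rfl fun j _ => (mul_div_assoc _ _ _).symm
      rw [h1]
      exact div_self (hSpos ω).ne'
    rw [this, integral_const]
    simp [measure_univ]
  -- translate goal integrand
  have hgoal : ∀ i : Fin m,
      (∫ ω, (1 + ((∏ k ∈ Finset.range n, (1 + X k ω i)) - 1)) /
        (1 + ∑ j, Kstar j * ((∏ k ∈ Finset.range n, (1 + X k ω j)) - 1)) ∂μ) =
      ∫ ω, P i ω / S ω ∂μ := by
    intro i
    apply integral_congr_ae
    filter_upwards with ω
    show (1 + (P i ω - 1)) / (1 + ∑ j, Kstar j * (P j ω - 1)) = P i ω / S ω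
    rw [hrw Kstar hKstar1 ω, show (1:ℝ) + (P i ω - 1) = P i ω from by ring]
  intro i
  constructor
  · intro hKi
    rw [hgoal i]
    refine le_antisymm (hA i) ?_
    set E : ℝ := ∫ ω, P i ω / S ω ∂μ with hEdef
    have hstep : ∑ j, Kstar j * ∫ ω, P j ω / S ω ∂μ ≤
        ∑ j, (Kstar j + if j = i then Kstar i * (E - 1) else 0) := by
      apply Finset.sum_le_sum
      intro j _
      by_cases h : j = i
      · subst h
        rw [if_pos rfl, show Kstar j + Kstar j * (E - 1) = Kstar j * E from by ring,
          ← hEdef]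
      · rw [if_neg h, add_zero]
        nlinarith [hA j, hKstar0 j]
    have hsum : ∑ j, (Kstar j + if j = i then Kstar i * (E - 1) else 0)
        = 1 + Kstar i * (E - 1) := by
      rw [Finset.sum_add_distrib, hKstar1,
        Finset.sum_ite_eq' Finset.univ i (fun _ => Kstar i * (E - 1)),
        if_pos (Finset.mem_univ i)]
    rw [hsum, hB] at hstep
    nlinarith [hstep, hKi]
  · intro _
    rw [hgoal i]
    exact hA i
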